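/- Let $\iota$ be a finite index type. For each $i \in \iota$, let $K_{x_i x_i}, G_x^i \in \mathbb{R}^{n_x \times n_x}$ with each $G_x^i$ invertible, $K_{x_i u}, G_u^i \in \mathbb{R}^{n_x \times n_u}$, $K_{u x_i} \in \mathbb{R}^{n_u \times n_x}$, and let $K_{uu} \in \mathbb{R}^{n_u \times n_u}$. Define $A_0 := K_{uu}$, $A_i := \begin{bmatrix} K_{x_i x_i} & (G_x^i)^\top \\ G_x^i & 0 \end{bmatrix}$, $B_i := \begin{bmatrix} K_{u x_i} & (G_u^i)^\top \end{bmatrix}$, $B_i' := \begin{bmatrix} K_{x_i u} \\ G_u^i \end{bmatrix}$, the arrowhead matrix $K := \begin{bmatrix} \mathrm{blockdiag}_i(K_{x_i x_i}) & (K_{x_i u})_i \\ (K_{u x_i})_i & K_{uu} \end{bmatrix}$, and $Z := \begin{bmatrix} -G_x^{-1} G_u \\ I \end{bmatrix}$ where $G_x = \mathrm{blockdiag}_i(G_x^i)$ and $G_u = (G_u^i)_i$ stacked. Then the Schur complement $S_{uu} := A_0 - \sum_{i \in \iota} B_i A_i^{-1} B_i'$ equals the reduced matrix: $S_{uu} =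 Z^\top K Z$. -/

import Mathlib

set_option maxHeartbeats 1000000

open Matrix

section aux

variable {ι : Type*} [Fintype ι] [DecidableEq ι] {nx nu m k : ℕ}

lemma hstack_mul_stack (P : ι → Matrix (Fin m) (Fin nx) ℝ)
    (Q : ι → Matrix (Fin nx) (Fin k) ℝ) :
    (Matrix.of fun a (p : Fin nx × ι) => P p.2 a p.1) *
      (Matrix.of fun (p : Fin nx × ι) j => Q p.2 p.1 j) = ∑ i, P i * Q i := by
  ext a j
  simp only [Matrix.mul_apply, Matrix.sum_apply, Matrix.of_apply]
  rw [Fintype.sum_prod_type_right]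

lemma blockDiag_mul_stack (M : ι → Matrix (Fin nx) (Fin nx) ℝ)
    (Q : ι → Matrix (Fin nx) (Fin k) ℝ) :
    Matrix.blockDiagonal M * (Matrix.of fun (p : Fin nx × ι) j => Q p.2 p.1 j) =
      Matrix.of fun (p : Fin nx × ι) j => (M p.2 * Q p.2) p.1 j := by
  ext ⟨x, i⟩ j
  simp only [Matrix.mul_apply, Matrix.of_apply, Matrix.blockDiagonal_apply]
  rw [Fintype.sum_prod_type_right]
  simp [Finset.sum_ite_eq', Matrix.mul_apply]

lemma stack_transpose (Q : ι → Matrix (Fin nx) (Fin k) ℝ) :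
    (Matrix.of fun (p : Fin nx × ι) j => Q p.2 p.1 j)ᵀ =
      Matrix.of fun j (p : Fin nx × ι) => (Q p.2)ᵀ j p.1 := by
  ext j ⟨x, i⟩
  rfl

end aux

/-- The Schur complement `Suu = A₀ - ∑ i, Bᵢ Aᵢ⁻¹ Bᵢ'` of the condensed
block-angular KKT system equals the reduced matrix `Zᵀ K Z`. -/
theorem schur_complement_eq_reduced_matrix {ι : Type*} [Fintype ι] [DecidableEq ι]
    {nx nu : ℕ}
    (Kxx Gxi : ι → Matrix (Fin nx) (Fin nx) ℝ) (hGxi : ∀ i, IsUnit (Gxi i).det)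
    (Kxu Gui : ι → Matrix (Fin nx) (Fin nu) ℝ)
    (Kux : ι → Matrix (Fin nu) (Fin nx) ℝ)
    (Kuu : Matrix (Fin nu) (Fin nu) ℝ)
    (A0 : Matrix (Fin nu) (Fin nu) ℝ) (hA0 : A0 = Kuu)
    (A : ι → Matrix (Fin nx ⊕ Fin nx) (Fin nx ⊕ Fin nx) ℝ)
    (hA : ∀ i, A i = Matrix.fromBlocks (Kxx i) (Gxi i)ᵀ (Gxi i) 0)
    (B : ι → Matrix (Fin nu) (Fin nx ⊕ Fin nx) ℝ)
    (hB : ∀ i, B i = Matrix.fromCols (Kux i) (Gui i)ᵀ)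
    (B' : ι → Matrix (Fin nx ⊕ Fin nx) (Fin nu) ℝ)
    (hB' : ∀ i, B' i = Matrix.fromRows (Kxu i) (Gui i))
    (K : Matrix ((Fin nx × ι) ⊕ Fin nu) ((Fin nx × ι) ⊕ Fin nu) ℝ)
    (hK : K = Matrix.fromBlocks
      (Matrix.blockDiagonal Kxx)
      (Matrix.of fun p j => Kxu p.2 p.1 j)
      (Matrix.of fun a p => Kux p.2 a p.1)
      Kuu)
    (Gx : Matrix (Fin nx × ι) (Fin nx × ι) ℝ) (hGx : Gx = Matrix.blockDiagonal Gxi)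
    (Gu : Matrix (Fin nx × ι) (Fin nu) ℝ)
    (hGu : Gu = Matrix.of fun p j => Gui p.2 p.1 j)
    (Z : Matrix ((Fin nx × ι) ⊕ Fin nu) (Fin nu) ℝ)
    (hZ : Z = Matrix.fromRows (-(Gx⁻¹ * Gu)) 1)
    (Suu : Matrix (Fin nu) (Fin nu) ℝ)
    (hSuu : Suu = A0 - ∑ i, B i * (A i)⁻¹ * B' i) :
    Suu = Zᵀ * K * Z := by
  set H : ι → Matrix (Fin nx) (Fin nx) ℝ := fun i => (Gxi i)⁻¹ with hH
  set C : ι → Matrix (Fin nx) (Fin nu) ℝ := fun i => H i * Gui i with hC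
  have hGH : ∀ i, Gxi i * H i = 1 := fun i => Matrix.mul_nonsing_inv _ (hGxi i)
  have hHG : ∀ i, H i * Gxi i = 1 := fun i => Matrix.nonsing_inv_mul _ (hGxi i)
  have hGHt : ∀ i, (Gxi i)ᵀ * (H i)ᵀ = 1 := by
    intro i
    rw [← Matrix.transpose_mul, hHG i, Matrix.transpose_one]
  -- inverse of A i
  have hAinv : ∀ i, (A i)⁻¹ =
      Matrix.fromBlocks 0 (H i) (H i)ᵀ (-((H i)ᵀ * Kxx i * H i)) := by
    intro i
    apply Matrix.inv_eq_right_inv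
    rw [hA i, Matrix.fromBlocks_multiply]
    have h1 : Kxx i * 0 + (Gxi i)ᵀ * (H i)ᵀ = (1 : Matrix (Fin nx) (Fin nx) ℝ) := by
      rw [Matrix.mul_zero, zero_add, hGHt i]
    have h2 : Kxx i * H i + (Gxi i)ᵀ * -((H i)ᵀ * Kxx i * H i) = 0 := by
      rw [Matrix.mul_neg, ← Matrix.mul_assoc, ← Matrix.mul_assoc, hGHt i,
        Matrix.one_mul, add_neg_cancel]
    have h3 : Gxi i * 0 + 0 * (H i)ᵀ = (0 : Matrix (Fin nx) (Fin nx) ℝ) := by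
      simp
    have h4 : Gxi i * H i + 0 * -((H i)ᵀ * Kxx i * H i) = (1 : Matrix (Fin nx) (Fin nx) ℝ) := by
      rw [Matrix.zero_mul, add_zero, hGH i]
    rw [h1, h2, h3, h4, Matrix.fromBlocks_one]
  -- each summand
  have hterm : ∀ i, B i * (A i)⁻¹ * B' i =
      (C i)ᵀ * Kxu i + Kux i * C i - (C i)ᵀ * (Kxx i * C i) := by
    intro i
    rw [hB i, hB' i, hAinv i, Matrix.fromCols_mul_fromBlocks,
      Matrix.fromCols_mul_fromRows]
    simp only [Matrix.mul_zero, zero_add, Matrix.mul_neg]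
    have ht : (C i)ᵀ = (Gui i)ᵀ * (H i)ᵀ := by
      rw [hC, Matrix.transpose_mul]
    rw [ht]
    simp only [Matrix.add_mul, Matrix.neg_mul, Matrix.mul_assoc, hC, sub_eq_add_neg]
    abel
  -- Gx⁻¹
  have hGxinv : Gx⁻¹ = Matrix.blockDiagonal H := by
    apply Matrix.inv_eq_right_inv
    rw [hGx, ← Matrix.blockDiagonal_mul]
    have : (fun i => Gxi i * H i) = fun _ => (1 : Matrix (Fin nx) (Fin nx) ℝ) := by
      funext i; exact hGH i
    rw [this]
    exact Matrix.blockDiagonal_one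
  have hGxGu : Gx⁻¹ * Gu = Matrix.of fun (p : Fin nx × ι) j => C p.2 p.1 j := by
    rw [hGxinv, hGu, blockDiag_mul_stack]
  -- expand RHS
  rw [hZ, hK, hGxGu, Matrix.transpose_fromRows, Matrix.fromCols_mul_fromBlocks,
    Matrix.fromCols_mul_fromRows]
  have hP1 : (Matrix.of fun a (p : Fin nx × ι) => (C p.2)ᵀ a p.1) *
      (Matrix.of fun (p : Fin nx × ι) j => (Kxx p.2 * C p.2) p.1 j) =
      ∑ i, (C i)ᵀ * (Kxx i * C i) := hstack_mul_stack (fun i => (C i)ᵀ) (fun i => Kxx i * C i)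
  have hP2 : (Matrix.of fun a (p : Fin nx × ι) => Kux p.2 a p.1) *
      (Matrix.of fun (p : Fin nx × ι) j => C p.2 p.1 j) =
      ∑ i, Kux i * C i := hstack_mul_stack Kux C
  have hP3 : (Matrix.of fun a (p : Fin nx × ι) => (C p.2)ᵀ a p.1) *
      (Matrix.of fun (p : Fin nx × ι) j => Kxu p.2 p.1 j) =
      ∑ i, (C i)ᵀ * Kxu i := hstack_mul_stack (fun i => (C i)ᵀ) Kxu
  simp only [Matrix.transpose_neg, Matrix.transpose_one, Matrix.one_mul, Matrix.mul_one,
    Matrix.neg_mul, Matrix.mul_neg, neg_neg, Matrix.add_mul, stack_transpose]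
  rw [Matrix.mul_assoc, blockDiag_mul_stack, hP1, hP2, hP3]
  rw [hSuu, hA0]
  have hsum : ∑ i, B i * (A i)⁻¹ * B' i =
      (∑ i, (C i)ᵀ * Kxu i) + (∑ i, Kux i * C i) - ∑ i, (C i)ᵀ * (Kxx i * C i) := by
    rw [← Finset.sum_add_distrib, ← Finset.sum_sub_distrib]
    exact Finset.sum_congr rfl fun i _ => hterm i
  rw [hsum]
  abel
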